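/- Let N be an even positive integer with N ≥ 4 and let ν be the least positive root of U'_{N+1}(x). For k = 1,…,N let z_k(ν) = (−1)^{k−1}( U_{k−1}(ν)U_k(ν) − U_{N−k}(ν)U_{N−k+1}(ν) + ((N+1−2k)/(N+1)) U_N(ν)U_{N+1}(ν) ). Then 0 < z_1(ν) and z_k(ν) < z_{k+1}(ν) for every k = 1,…,N/2 − 1; in particular 0 < z_1(ν) < z_2(ν) < ⋯ < z_{N/2}(ν). -/

import Mathlib

/-- Evaluation of the Chebyshev polynomial of the second kind. -/
noncomputable def Ucheb (n : ℤ) (x : ℝ) : ℝ := (Polynomial.Chebyshev.U ℝ n).eval x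

/-- Evaluation of the derivative of the Chebyshev polynomial of the second kind. -/
noncomputable def Ucheb' (n : ℤ) (x : ℝ) : ℝ :=
  (Polynomial.derivative (Polynomial.Chebyshev.U ℝ n)).eval x

/-- The k-th coordinate (1-based) of the vector Z(x). -/
noncomputable def zCoord (N k : ℕ) (x : ℝ) : ℝ :=
  (-1 : ℝ) ^ (k - 1) *
    (Ucheb ((k : ℤ) - 1) x * Ucheb (k : ℤ) x
      - Ucheb ((N : ℤ) - k) x * Ucheb ((N : ℤ) - k + 1) x
      + (((N : ℝ) + 1 - 2 * k) / ((N : ℝ) + 1)) * Ucheb (N : ℤ) x * Ucheb ((N : ℤ) + 1) x)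

open Real

lemma lem_sinMulSin (x y : ℝ) :
    Real.sin x * Real.sin y = (Real.cos (x - y) - Real.cos (x + y)) / 2 := by
  have h := Real.two_mul_sin_mul_sin x y
  linarith

lemma lem_sinAddSin (x y : ℝ) :
    Real.sin x + Real.sin y = 2 * Real.sin ((x + y) / 2) * Real.cos ((x - y) / 2) := by
  have h := Real.two_mul_sin_mul_cos ((x + y) / 2) ((x - y) / 2)
  rw [show (x + y) / 2 - (x - y) / 2 = y from by ring,
    show (x + y) / 2 + (x - y) / 2 = x from by ring] at h
  linarith

lemma lem_cosOdd (j : ℕ) (α : ℝ) :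
    Real.cos ((2 * (j : ℝ) + 1) * (π / 2 - α)) = (-1 : ℝ) ^ j * Real.sin ((2 * (j : ℝ) + 1) * α) := by
  have h : (2 * (j : ℝ) + 1) * (π / 2 - α) = ((j + 1 : ℕ) : ℝ) * π - (π / 2 + (2 * (j : ℝ) + 1) * α) := by
    push_cast; ring
  rw [h, Real.cos_nat_mul_pi_sub, Real.cos_add, Real.cos_pi_div_two, Real.sin_pi_div_two, pow_succ]
  ring

lemma lem_concave (t x : ℝ) (ht0 : 0 ≤ t) (ht1 : t ≤ 1) (hx0 : 0 ≤ x) (hxπ : x ≤ π) :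
    t * Real.sin x ≤ Real.sin (t * x) := by
  have h := (strictConcaveOn_sin_Icc.concaveOn).2 (Set.mem_Icc.2 ⟨le_refl 0, pi_pos.le⟩)
    (Set.mem_Icc.2 ⟨hx0, hxπ⟩) (by linarith : (0:ℝ) ≤ 1 - t) ht0 (by ring)
  simpa using h

set_option maxHeartbeats 2000000 in
lemma zform (N k : ℕ) (hNeven : Even N) (hk1 : 1 ≤ k) (hkN : k ≤ N) (α : ℝ) :
    zCoord N k (Real.cos (π / 2 - α)) * Real.cos α ^ 2
      = Real.sin (((N : ℝ) + 2) * α) *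
        (Real.cos (((N : ℝ) + 1 - 2 * (k : ℝ)) * α)
          + (-1 : ℝ) ^ (k - 1) * (((N : ℝ) + 1 - 2 * (k : ℝ)) / ((N : ℝ) + 1))
            * Real.cos (((N : ℝ) + 1) * α)) := by
  set θ := π / 2 - α with hθdef
  have hs : Real.sin θ = Real.cos α := Real.sin_pi_div_two_sub α
  have hU : ∀ m : ℤ, Ucheb m (Real.cos θ) * Real.sin θ = Real.sin (((m : ℝ) + 1) * θ) := by
    intro m
    exact Polynomial.Chebyshev.U_real_cos θ m
  have hU1 : Ucheb ((k : ℤ) - 1) (Real.cos θ) * Real.sin θ = Real.sin ((k : ℝ) * θ) := by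
    have h := hU ((k : ℤ) - 1)
    rw [show ((((k : ℤ) - 1 : ℤ)) : ℝ) + 1 = (k : ℝ) from by push_cast; ring] at h
    exact h
  have hU2 : Ucheb (k : ℤ) (Real.cos θ) * Real.sin θ = Real.sin (((k : ℝ) + 1) * θ) := by
    have h := hU (k : ℤ)
    rw [show (((k : ℤ)) : ℝ) = (k : ℝ) from by push_cast; ring] at h
    exact h
  have hU3 : Ucheb ((N : ℤ) - (k : ℤ)) (Real.cos θ) * Real.sin θ
      = Real.sin (((N : ℝ) - (k : ℝ) + 1) * θ) := by
    have h := hU ((N : ℤ) - (k : ℤ))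
    rw [show ((((N : ℤ) - (k : ℤ) : ℤ)) : ℝ) + 1 = (N : ℝ) - (k : ℝ) + 1 from by push_cast; ring] at h
    exact h
  have hU4 : Ucheb ((N : ℤ) - (k : ℤ) + 1) (Real.cos θ) * Real.sin θ
      = Real.sin (((N : ℝ) - (k : ℝ) + 2) * θ) := by
    have h := hU ((N : ℤ) - (k : ℤ) + 1)
    rw [show ((((N : ℤ) - (k : ℤ) + 1 : ℤ)) : ℝ) + 1 = (N : ℝ) - (k : ℝ) + 2 from by push_cast; ring] at h
    exact h
  have hU5 : Ucheb (N : ℤ) (Real.cos θ) * Real.sin θ = Real.sin (((N : ℝ) + 1) * θ) := by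
    have h := hU (N : ℤ)
    rw [show (((N : ℤ)) : ℝ) = (N : ℝ) from by push_cast; ring] at h
    exact h
  have hU6 : Ucheb ((N : ℤ) + 1) (Real.cos θ) * Real.sin θ = Real.sin (((N : ℝ) + 2) * θ) := by
    have h := hU ((N : ℤ) + 1)
    rw [show ((((N : ℤ) + 1 : ℤ)) : ℝ) + 1 = (N : ℝ) + 2 from by push_cast; ring] at h
    exact h
  have expand : zCoord N k (Real.cos θ) * Real.sin θ ^ 2
      = (-1 : ℝ) ^ (k - 1) *
        ((Ucheb ((k : ℤ) - 1) (Real.cos θ) * Real.sin θ) * (Ucheb (k : ℤ) (Real.cos θ) * Real.sin θ)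
          - (Ucheb ((N : ℤ) - (k : ℤ)) (Real.cos θ) * Real.sin θ)
              * (Ucheb ((N : ℤ) - (k : ℤ) + 1) (Real.cos θ) * Real.sin θ)
          + (((N : ℝ) + 1 - 2 * (k : ℝ)) / ((N : ℝ) + 1)) *
              ((Ucheb (N : ℤ) (Real.cos θ) * Real.sin θ) * (Ucheb ((N : ℤ) + 1) (Real.cos θ) * Real.sin θ))) := by
    unfold zCoord; ring
  rw [hU1, hU2, hU3, hU4, hU5, hU6] at expand
  have p1 : Real.sin ((k : ℝ) * θ) * Real.sin (((k : ℝ) + 1) * θ)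
      = (Real.sin α - (-1 : ℝ) ^ k * Real.sin ((2 * (k : ℝ) + 1) * α)) / 2 := by
    rw [lem_sinMulSin, show (k : ℝ) * θ - ((k : ℝ) + 1) * θ = -θ from by ring,
      show (k : ℝ) * θ + ((k : ℝ) + 1) * θ = (2 * (k : ℝ) + 1) * θ from by ring,
      Real.cos_neg, hθdef, Real.cos_pi_div_two_sub, lem_cosOdd k α]
  have p2 : Real.sin (((N : ℝ) - (k : ℝ) + 1) * θ) * Real.sin (((N : ℝ) - (k : ℝ) + 2) * θ)
      = (Real.sin α - (-1 : ℝ) ^ (N - k + 1) * Real.sin ((2 * ((N : ℝ) - (k : ℝ)) + 3) * α)) / 2 := by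
    rw [lem_sinMulSin,
      show ((N : ℝ) - (k : ℝ) + 1) * θ - ((N : ℝ) - (k : ℝ) + 2) * θ = -θ from by ring,
      show ((N : ℝ) - (k : ℝ) + 1) * θ + ((N : ℝ) - (k : ℝ) + 2) * θ
          = (2 * ((N - k + 1 : ℕ) : ℝ) + 1) * θ from by push_cast [Nat.cast_sub hkN]; ring,
      Real.cos_neg, hθdef, Real.cos_pi_div_two_sub, lem_cosOdd (N - k + 1) α,
      show (2 * ((N - k + 1 : ℕ) : ℝ) + 1) * α = (2 * ((N : ℝ) - (k : ℝ)) + 3) * α from by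
        push_cast [Nat.cast_sub hkN]; ring]
  have p3 : Real.sin (((N : ℝ) + 1) * θ) * Real.sin (((N : ℝ) + 2) * θ)
      = (Real.sin α + Real.sin ((2 * (N : ℝ) + 3) * α)) / 2 := by
    rw [lem_sinMulSin,
      show ((N : ℝ) + 1) * θ - ((N : ℝ) + 2) * θ = -θ from by ring,
      show ((N : ℝ) + 1) * θ + ((N : ℝ) + 2) * θ = (2 * ((N + 1 : ℕ) : ℝ) + 1) * θ from by
        push_cast; ring,
      Real.cos_neg, hθdef, Real.cos_pi_div_two_sub, lem_cosOdd (N + 1) α,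
      show (2 * ((N + 1 : ℕ) : ℝ) + 1) * α = (2 * (N : ℝ) + 3) * α from by push_cast; ring,
      Odd.neg_one_pow hNeven.add_one]
    ring
  rw [p1, p2, p3, hs] at expand
  have sp1 : Real.sin ((2 * (k : ℝ) + 1) * α) + Real.sin ((2 * ((N : ℝ) - (k : ℝ)) + 3) * α)
      = 2 * Real.sin (((N : ℝ) + 2) * α) * Real.cos (((N : ℝ) + 1 - 2 * (k : ℝ)) * α) := by
    have h := lem_sinAddSin ((2 * (k : ℝ) + 1) * α) ((2 * ((N : ℝ) - (k : ℝ)) + 3) * α)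
    rw [show ((2 * (k : ℝ) + 1) * α + (2 * ((N : ℝ) - (k : ℝ)) + 3) * α) / 2 = ((N : ℝ) + 2) * α from by ring,
      show ((2 * (k : ℝ) + 1) * α - (2 * ((N : ℝ) - (k : ℝ)) + 3) * α) / 2
          = -(((N : ℝ) + 1 - 2 * (k : ℝ)) * α) from by ring,
      Real.cos_neg] at h
    exact h
  have sp2 : Real.sin α + Real.sin ((2 * (N : ℝ) + 3) * α)
      = 2 * Real.sin (((N : ℝ) + 2) * α) * Real.cos (((N : ℝ) + 1) * α) := by
    have h := lem_sinAddSin α ((2 * (N : ℝ) + 3) * α)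
    rw [show (α + (2 * (N : ℝ) + 3) * α) / 2 = ((N : ℝ) + 2) * α from by ring,
      show (α - (2 * (N : ℝ) + 3) * α) / 2 = -(((N : ℝ) + 1) * α) from by ring,
      Real.cos_neg] at h
    exact h
  rcases Nat.even_or_odd k with hke | hko
  · have h1 : Odd (k - 1) := Nat.Even.sub_odd hk1 hke odd_one
    have h2 : Odd (N - k + 1) := (Even.tsub hNeven hke).add_one
    rw [h1.neg_one_pow, hke.neg_one_pow, h2.neg_one_pow] at expand
    rw [h1.neg_one_pow]
    linear_combination expand + (1 / 2) * sp1
      - ((((N : ℝ) + 1 - 2 * (k : ℝ)) / ((N : ℝ) + 1)) / 2) * sp2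
  · have h1 : Even (k - 1) := Nat.Odd.sub_odd hko odd_one
    have h2 : Even (N - k + 1) := (Nat.Even.sub_odd hkN hNeven hko).add_one
    rw [h1.neg_one_pow, hko.neg_one_pow, h2.neg_one_pow] at expand
    rw [h1.neg_one_pow]
    linear_combination expand + (1 / 2) * sp1
      + ((((N : ℝ) + 1 - 2 * (k : ℝ)) / ((N : ℝ) + 1)) / 2) * sp2

set_option maxHeartbeats 2000000 in
theorem stmt11 (N : ℕ) (hN : 4 ≤ N) (hNeven : Even N)
    (ν : ℝ) (hν0 : 0 < ν) (hνroot : Ucheb' (N + 1) ν = 0)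
    (hνleast : ∀ x : ℝ, 0 < x → x < ν → Ucheb' (N + 1) x ≠ 0) :
    0 < zCoord N 1 ν
      ∧ ∀ k : ℕ, 1 ≤ k → k ≤ N / 2 - 1 → zCoord N k ν < zCoord N (k + 1) ν := by
  obtain ⟨n, hn⟩ := hNeven
  have hNeven' : Even N := ⟨n, hn⟩
  have hn2 : 2 ≤ n := by omega
  have hN4R : (4 : ℝ) ≤ (N : ℝ) := by exact_mod_cast hN
  have hNp2 : (0 : ℝ) < (N : ℝ) + 2 := by linarith
  -- Step A : ν < sin (π / (N+2))
  have hb1 : π / ((N : ℝ) + 2) < π / 2 := by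
    rw [div_lt_div_iff₀ hNp2 (by norm_num)]
    nlinarith [pi_pos]
  have hbpos : 0 < π / ((N : ℝ) + 2) := div_pos pi_pos hNp2
  have hb0 : 0 < Real.sin (π / ((N : ℝ) + 2)) :=
    Real.sin_pos_of_pos_of_lt_pi hbpos (by linarith [pi_pos])
  have hf0 : (Polynomial.Chebyshev.U ℝ ((N : ℤ) + 1)).eval 0 = 0 := by
    have h := Polynomial.Chebyshev.U_real_cos (π / 2) ((N : ℤ) + 1)
    rw [Real.cos_pi_div_two, Real.sin_pi_div_two, mul_one] at h
    rw [h, show (((((N : ℤ) + 1 : ℤ)) : ℝ) + 1) * (π / 2) = ((n + 1 : ℕ) : ℝ) * π from by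
      push_cast; rw [hn]; push_cast; ring, Real.sin_nat_mul_pi]
  have hfb : (Polynomial.Chebyshev.U ℝ ((N : ℤ) + 1)).eval (Real.sin (π / ((N : ℝ) + 2))) = 0 := by
    have hsb : Real.sin (π / 2 - π / ((N : ℝ) + 2)) ≠ 0 :=
      ne_of_gt (Real.sin_pos_of_pos_of_lt_pi (by linarith) (by linarith [pi_pos]))
    have h := Polynomial.Chebyshev.U_real_cos (π / 2 - π / ((N : ℝ) + 2)) ((N : ℤ) + 1)
    rw [Real.cos_pi_div_two_sub] at h
    have harg : (((((N : ℤ) + 1 : ℤ)) : ℝ) + 1) * (π / 2 - π / ((N : ℝ) + 2)) = ((n : ℕ) : ℝ) * π := by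
      have hNe : ((N : ℝ) + 2) ≠ 0 := by positivity
      push_cast
      rw [hn]
      push_cast
      field_simp
      ring
    rw [harg, Real.sin_nat_mul_pi] at h
    exact (mul_eq_zero.mp h).resolve_right hsb
  have hνb : ν < Real.sin (π / ((N : ℝ) + 2)) := by
    obtain ⟨c, hcI, hcd⟩ := exists_deriv_eq_zero hb0
      ((Polynomial.continuous _).continuousOn) (by rw [hf0, hfb])
    rw [Polynomial.deriv] at hcd
    by_contra hcon
    push_neg at hcon
    exact hνleast c hcI.1 (lt_of_lt_of_le hcI.2 hcon) hcd
  -- arcsin setup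
  have hb2 : Real.sin (π / ((N : ℝ) + 2)) ≤ 1 := Real.sin_le_one _
  obtain ⟨α, hαdef⟩ : ∃ a : ℝ, a = Real.arcsin ν := ⟨_, rfl⟩
  have hsinα : Real.sin α = ν := by
    rw [hαdef]; exact Real.sin_arcsin (by linarith) (by linarith)
  have hα0 : 0 < α := by rw [hαdef]; exact Real.arcsin_pos.mpr hν0
  have hαb : α < π / ((N : ℝ) + 2) := by
    rw [hαdef]; exact (Real.arcsin_lt_iff_lt_sin' ⟨by linarith, hb1.le⟩).mpr hνb
  have hαhalf : α < π / 2 := lt_trans hαb hb1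
  have hcosα : 0 < Real.cos α := Real.cos_pos_of_mem_Ioo ⟨by linarith, hαhalf⟩
  have hsinα0 : 0 < Real.sin α := by rw [hsinα]; exact hν0
  have hν : ν = Real.cos (π / 2 - α) := by rw [Real.cos_pi_div_two_sub, hsinα]
  -- Step B : derivative condition in trig form
  have hθ0 : 0 < π / 2 - α := by linarith
  have hθπ : π / 2 - α < π := by linarith [pi_pos]
  have hsθ : Real.sin (π / 2 - α) = Real.cos α := Real.sin_pi_div_two_sub α
  have hsθ0 : Real.sin (π / 2 - α) ≠ 0 := by rw [hsθ]; exact hcosα.ne'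
  have hFG : (fun t => (Polynomial.Chebyshev.U ℝ ((N : ℤ) + 1)).eval (Real.cos t))
      =ᶠ[nhds (π / 2 - α)] (fun t => Real.sin (((N : ℝ) + 2) * t) / Real.sin t) := by
    filter_upwards [isOpen_Ioo.mem_nhds (show (π / 2 - α) ∈ Set.Ioo 0 π from ⟨hθ0, hθπ⟩)] with t ht
    have hst : Real.sin t ≠ 0 := ne_of_gt (Real.sin_pos_of_pos_of_lt_pi ht.1 ht.2)
    have h := Polynomial.Chebyshev.U_real_cos t ((N : ℤ) + 1)
    rw [eq_div_iff hst, h]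
    congr 1
    push_cast
    ring
  have hder1 : deriv (fun t => (Polynomial.Chebyshev.U ℝ ((N : ℤ) + 1)).eval (Real.cos t)) (π / 2 - α) = 0 := by
    have hF : HasDerivAt (fun t => (Polynomial.Chebyshev.U ℝ ((N : ℤ) + 1)).eval (Real.cos t))
        ((Polynomial.derivative (Polynomial.Chebyshev.U ℝ ((N : ℤ) + 1))).eval (Real.cos (π / 2 - α))
          * (-Real.sin (π / 2 - α))) (π / 2 - α) := by
      simpa [Function.comp_def] using HasDerivAt.comp (π / 2 - α)
        (Polynomial.hasDerivAt (Polynomial.Chebyshev.U ℝ ((N : ℤ) + 1)) (Real.cos (π / 2 - α)))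
        (Real.hasDerivAt_cos (π / 2 - α))
    rw [hF.deriv, ← hν]
    have hr : (Polynomial.derivative (Polynomial.Chebyshev.U ℝ ((N : ℤ) + 1))).eval ν = 0 := hνroot
    rw [hr, zero_mul]
  have hG : HasDerivAt (fun t => Real.sin (((N : ℝ) + 2) * t) / Real.sin t)
      ((Real.cos (((N : ℝ) + 2) * (π / 2 - α)) * (((N : ℝ) + 2) * 1) * Real.sin (π / 2 - α)
        - Real.sin (((N : ℝ) + 2) * (π / 2 - α)) * Real.cos (π / 2 - α)) / Real.sin (π / 2 - α) ^ 2)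
      (π / 2 - α) := by
    have h1 : HasDerivAt (fun t : ℝ => Real.sin (((N : ℝ) + 2) * t))
        (Real.cos (((N : ℝ) + 2) * (π / 2 - α)) * (((N : ℝ) + 2) * 1)) (π / 2 - α) := by
      simpa [Function.comp_def] using HasDerivAt.comp (π / 2 - α)
        (Real.hasDerivAt_sin (((N : ℝ) + 2) * (π / 2 - α)))
        ((hasDerivAt_id (π / 2 - α)).const_mul ((N : ℝ) + 2))
    exact h1.div (Real.hasDerivAt_sin _) hsθ0
  have hnum : Real.cos (((N : ℝ) + 2) * (π / 2 - α)) * (((N : ℝ) + 2) * 1) * Real.sin (π / 2 - α)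
      - Real.sin (((N : ℝ) + 2) * (π / 2 - α)) * Real.cos (π / 2 - α) = 0 := by
    have h0 := hFG.deriv_eq
    rw [hder1, hG.deriv] at h0
    have := (div_eq_zero_iff.mp h0.symm).resolve_right (pow_ne_zero 2 hsθ0)
    exact this
  have E2 : ((N : ℝ) + 2) * Real.cos (((N : ℝ) + 2) * α) * Real.cos α
      + Real.sin (((N : ℝ) + 2) * α) * Real.sin α = 0 := by
    rw [show ((N : ℝ) + 2) * (π / 2 - α) = ((n + 1 : ℕ) : ℝ) * π - ((N : ℝ) + 2) * α from by
        rw [hn]; push_cast; ring,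
      Real.cos_nat_mul_pi_sub, Real.sin_nat_mul_pi_sub, hsθ, Real.cos_pi_div_two_sub] at hnum
    rcases Nat.even_or_odd (n + 1) with h | h
    · rw [h.neg_one_pow] at hnum; linear_combination hnum
    · rw [h.neg_one_pow] at hnum; linear_combination -hnum
  clear hFG hG hder1 hnum hf0 hfb hνroot hνleast hsθ0
  -- Step D : location of β = (N+2)α
  have hβπ : ((N : ℝ) + 2) * α < π := by
    have h := mul_lt_mul_of_pos_left hαb hNp2
    rwa [show ((N : ℝ) + 2) * (π / ((N : ℝ) + 2)) = π from by field_simp] at h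
  have hβhalf : π / 2 < ((N : ℝ) + 2) * α := by
    by_contra hcon
    push_neg at hcon
    have hβ0 : 0 < ((N : ℝ) + 2) * α := by positivity
    have hc : 0 ≤ Real.cos (((N : ℝ) + 2) * α) :=
      Real.cos_nonneg_of_mem_Icc ⟨by linarith [pi_pos], hcon⟩
    have hs : 0 < Real.sin (((N : ℝ) + 2) * α) :=
      Real.sin_pos_of_pos_of_lt_pi hβ0 (by linarith [pi_pos])
    nlinarith [mul_pos hs hsinα0, mul_nonneg (mul_nonneg hNp2.le hc) hcosα.le]
  obtain ⟨δ, hδdef⟩ : ∃ d : ℝ, d = ((N : ℝ) + 2) * α - π / 2 := ⟨_, rfl⟩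
  have hδ0 : 0 < δ := by rw [hδdef]; linarith
  have hδhalf : δ < π / 2 := by rw [hδdef]; linarith
  have hβeq : ((N : ℝ) + 2) * α = π / 2 + δ := by rw [hδdef]; ring
  have hcosβ : Real.cos (((N : ℝ) + 2) * α) = -Real.sin δ := by
    rw [hβeq, Real.cos_add, Real.cos_pi_div_two, Real.sin_pi_div_two]; ring
  have hsinβeq : Real.sin (((N : ℝ) + 2) * α) = Real.cos δ := by
    rw [hβeq, Real.sin_add, Real.cos_pi_div_two, Real.sin_pi_div_two]; ring
  have E3 : ((N : ℝ) + 2) * Real.sin δ * Real.cos α = Real.cos δ * Real.sin α := by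
    rw [hcosβ, hsinβeq] at E2; linear_combination -E2
  have hsinδ0 : 0 < Real.sin δ := Real.sin_pos_of_pos_of_lt_pi hδ0 (by linarith [pi_pos])
  have hcosδ0 : 0 < Real.cos δ := Real.cos_pos_of_mem_Ioo ⟨by linarith [pi_pos], hδhalf⟩
  have hδα : δ < α := by
    by_contra hcon
    push_neg at hcon
    have h1 : Real.sin α ≤ Real.sin δ :=
      Real.strictMonoOn_sin.monotoneOn ⟨by linarith [pi_pos], hαhalf.le⟩
        ⟨by linarith [pi_pos], hδhalf.le⟩ hcon
    have h2 : Real.cos δ ≤ Real.cos α :=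
      Real.strictAntiOn_cos.antitoneOn ⟨hα0.le, by linarith [pi_pos]⟩
        ⟨hδ0.le, by linarith [pi_pos]⟩ hcon
    have hx : Real.cos δ * Real.sin α ≤ Real.cos α * Real.sin δ :=
      mul_le_mul h2 h1 hsinα0.le hcosα.le
    have hy : Real.cos α * Real.sin δ < ((N : ℝ) + 2) * Real.sin δ * Real.cos α := by
      nlinarith [mul_pos hsinδ0 hcosα]
    linarith [E3, hx, hy]
  -- KEY inequality
  have h1cos : ((N : ℝ) + 2) * (1 - Real.cos α) < 1 := by
    have ha : Real.cos α = 1 - 2 * Real.sin (α / 2) ^ 2 := by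
      have h2 := Real.sin_sq_add_cos_sq (α / 2)
      have h3 := Real.cos_two_mul (α / 2)
      rw [show 2 * (α / 2) = α from by ring] at h3
      linarith
    have hs2 : Real.sin (α / 2) < α / 2 := Real.sin_lt (by linarith)
    have hs2' : 0 ≤ Real.sin (α / 2) :=
      Real.sin_nonneg_of_nonneg_of_le_pi (by linarith) (by linarith [pi_pos])
    have hsq : Real.sin (α / 2) ^ 2 ≤ (α / 2) ^ 2 := by nlinarith
    have hα6 : α < π / 6 := by
      have h6 : π / ((N : ℝ) + 2) ≤ π / 6 := by
        rw [div_le_div_iff₀ hNp2 (by norm_num)]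
        nlinarith [pi_pos]
      linarith
    have hpi : π < 3.15 := Real.pi_lt_d2
    have e0 : 1 - Real.cos α ≤ α ^ 2 / 2 := by nlinarith [ha, hsq]
    have e1 : ((N : ℝ) + 2) * (1 - Real.cos α) ≤ ((N : ℝ) + 2) * (α ^ 2 / 2) :=
      mul_le_mul_of_nonneg_left e0 hNp2.le
    have e3 : (((N : ℝ) + 2) * α) * α / 2 < π * α / 2 := by nlinarith [hβπ, hα0]
    have e4 : π * α / 2 < π * (π / 6) / 2 := by nlinarith [pi_pos, hα6]
    have e5 : π * (π / 6) / 2 < 1 := by nlinarith [pi_pos, hpi]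
    linarith [e1, e3, e4, e5]
  have key2eq : (((N : ℝ) + 2) * Real.cos α) *
      (Real.sin α * (Real.cos α * Real.cos δ + Real.sin α * Real.sin δ)
        - (Real.sin α * Real.cos δ - Real.cos α * Real.sin δ))
      = Real.sin α * Real.cos δ *
        ((Real.sin α ^ 2 + Real.cos α) - ((N : ℝ) + 2) * Real.cos α * (1 - Real.cos α)) := by
    linear_combination (Real.sin α ^ 2 + Real.cos α) * E3
  have hbr : 0 < (Real.sin α ^ 2 + Real.cos α) - ((N : ℝ) + 2) * Real.cos α * (1 - Real.cos α) := by
    have h := mul_lt_mul_of_pos_right h1cos hcosα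
    nlinarith [pow_pos hsinα0 2, h]
  have KEY : Real.sin (α - δ) < Real.sin α * Real.cos (α - δ) := by
    rw [Real.sin_sub, Real.cos_sub]
    have hA : (0 : ℝ) < ((N : ℝ) + 2) * Real.cos α := by positivity
    have hP : 0 < Real.sin α * Real.cos δ *
        ((Real.sin α ^ 2 + Real.cos α) - ((N : ℝ) + 2) * Real.cos α * (1 - Real.cos α)) :=
      mul_pos (mul_pos hsinα0 hcosδ0) hbr
    rw [← key2eq] at hP
    rcases mul_pos_iff.mp hP with ⟨_, h⟩ | ⟨h, _⟩
    · linarith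
    · linarith
  -- auxiliary positivity facts
  have hNα1 : ((N : ℝ) + 1) * α = π / 2 - (α - δ) := by rw [hδdef]; ring
  have hCeq : Real.cos (((N : ℝ) + 1) * α) = Real.sin (α - δ) := by
    rw [hNα1, Real.cos_pi_div_two_sub]
  have hSeq : Real.sin (((N : ℝ) + 1) * α) = Real.cos (α - δ) := by
    rw [hNα1, Real.sin_pi_div_two_sub]
  have hαδ0 : 0 < α - δ := by linarith
  have hC0 : 0 < Real.cos (((N : ℝ) + 1) * α) := by
    rw [hCeq]; exact Real.sin_pos_of_pos_of_lt_pi hαδ0 (by linarith [pi_pos])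
  have hM0 : 0 < Real.sin (((N : ℝ) + 2) * α) :=
    Real.sin_pos_of_pos_of_lt_pi (by linarith [pi_pos]) hβπ
  have hzf : ∀ m : ℕ, 1 ≤ m → m ≤ N →
      zCoord N m ν * Real.cos α ^ 2 = Real.sin (((N : ℝ) + 2) * α) *
        (Real.cos (((N : ℝ) + 1 - 2 * (m : ℝ)) * α)
          + (-1 : ℝ) ^ (m - 1) * (((N : ℝ) + 1 - 2 * (m : ℝ)) / ((N : ℝ) + 1))
            * Real.cos (((N : ℝ) + 1) * α)) := by
    intro m hm1 hmN
    rw [hν]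
    exact zform N m hNeven' hm1 hmN α
  constructor
  · -- positivity of z_1
    have h1 := hzf 1 le_rfl (by omega)
    rw [show ((1 : ℕ) - 1 : ℕ) = 0 from rfl, pow_zero, one_mul] at h1
    rw [show ((N : ℝ) + 1 - 2 * ((1 : ℕ) : ℝ)) = (N : ℝ) - 1 from by push_cast; ring] at h1
    have hcosN1 : 0 < Real.cos (((N : ℝ) - 1) * α) := by
      apply Real.cos_pos_of_mem_Ioo
      constructor
      · have := mul_pos (show (0:ℝ) < (N : ℝ) - 1 by linarith) hα0
        linarith [pi_pos]
      · have he : ((N : ℝ) - 1) * α = π / 2 + δ - 3 * α := by rw [hδdef]; ring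
        rw [he]; linarith
    have hcoef : 0 < ((N : ℝ) - 1) / ((N : ℝ) + 1) := by
      apply div_pos <;> linarith
    have hg1 : 0 < zCoord N 1 ν * Real.cos α ^ 2 := by
      rw [h1]
      exact mul_pos hM0 (by linarith [hcosN1, mul_pos hcoef hC0])
    rcases mul_pos_iff.mp hg1 with ⟨h, _⟩ | ⟨_, h⟩
    · exact h
    · linarith [pow_pos hcosα 2]
  · -- monotonicity
    intro k hk1 hk2
    have hkn : 2 * k + 2 ≤ N := by omega
    have hkNR : 2 * (k : ℝ) + 2 ≤ (N : ℝ) := by exact_mod_cast hkn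
    have hA0 := hzf k hk1 (by omega)
    have hB0 := hzf (k + 1) (by omega) (by omega)
    rw [show ((k + 1 : ℕ) : ℝ) = (k : ℝ) + 1 from by push_cast; ring] at hB0
    rw [show ((N : ℝ) + 1 - 2 * ((k : ℝ) + 1)) = (N : ℝ) - 1 - 2 * (k : ℝ) from by ring] at hB0
    rw [Nat.add_sub_cancel] at hB0
    -- difference of cosines
    have hd : Real.cos (((N : ℝ) - 1 - 2 * (k : ℝ)) * α) - Real.cos (((N : ℝ) + 1 - 2 * (k : ℝ)) * α)
        = 2 * Real.sin (((N : ℝ) - 2 * (k : ℝ)) * α) * Real.sin α := by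
      have h := Real.cos_sub_cos (((N : ℝ) - 1 - 2 * (k : ℝ)) * α) (((N : ℝ) + 1 - 2 * (k : ℝ)) * α)
      rw [show ((((N : ℝ) - 1 - 2 * (k : ℝ)) * α + ((N : ℝ) + 1 - 2 * (k : ℝ)) * α) / 2)
            = ((N : ℝ) - 2 * (k : ℝ)) * α from by ring,
        show ((((N : ℝ) - 1 - 2 * (k : ℝ)) * α - ((N : ℝ) + 1 - 2 * (k : ℝ)) * α) / 2) = -α from by ring,
        Real.sin_neg] at h
      linarith
    have hS0 : 0 < Real.sin (((N : ℝ) - 2 * (k : ℝ)) * α) := by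
      apply Real.sin_pos_of_pos_of_lt_pi
      · exact mul_pos (by linarith) hα0
      · have := mul_le_mul_of_nonneg_right (show (N : ℝ) - 2 * (k : ℝ) ≤ (N : ℝ) + 2 by linarith) hα0.le
        linarith [hβπ]
    have hconc : ((N : ℝ) - 2 * (k : ℝ)) / ((N : ℝ) + 1) * Real.sin (((N : ℝ) + 1) * α)
        ≤ Real.sin (((N : ℝ) - 2 * (k : ℝ)) * α) := by
      have ht0 : 0 ≤ ((N : ℝ) - 2 * (k : ℝ)) / ((N : ℝ) + 1) := by
        apply div_nonneg <;> linarith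
      have ht1 : ((N : ℝ) - 2 * (k : ℝ)) / ((N : ℝ) + 1) ≤ 1 := by
        rw [div_le_one (by linarith)]; linarith
      have hx0 : (0 : ℝ) ≤ ((N : ℝ) + 1) * α := by positivity
      have hxπ : ((N : ℝ) + 1) * α ≤ π := by
        have := mul_le_mul_of_nonneg_right (show (N : ℝ) + 1 ≤ (N : ℝ) + 2 by linarith) hα0.le
        linarith [hβπ]
      have h := lem_concave _ _ ht0 ht1 hx0 hxπ
      rwa [show ((N : ℝ) - 2 * (k : ℝ)) / ((N : ℝ) + 1) * (((N : ℝ) + 1) * α)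
          = ((N : ℝ) - 2 * (k : ℝ)) * α from by field_simp] at h
    -- reduce to comparing the bracketed quantities
    have hred : zCoord N k ν * Real.cos α ^ 2 < zCoord N (k + 1) ν * Real.cos α ^ 2 → 
        zCoord N k ν < zCoord N (k + 1) ν := by
      intro h
      exact lt_of_mul_lt_mul_right h (pow_pos hcosα 2).le
    apply hred
    rw [hA0, hB0]
    apply mul_lt_mul_of_pos_left _ hM0
    -- clear denominators
    have hNp1 : (0 : ℝ) < (N : ℝ) + 1 := by linarith
    rcases Nat.even_or_odd k with hke | hko
    · -- k even : coefficient signs ε_k = -1, ε_{k+1} = 1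
      rw [(Nat.Even.sub_odd hk1 hke odd_one).neg_one_pow, hke.neg_one_pow]
      have h6 : ((N : ℝ) + 1) * (Real.cos (((N : ℝ) - 1 - 2 * (k : ℝ)) * α)
          - Real.cos (((N : ℝ) + 1 - 2 * (k : ℝ)) * α))
          = ((N : ℝ) + 1) * (2 * Real.sin (((N : ℝ) - 2 * (k : ℝ)) * α) * Real.sin α) := by
        rw [hd]
      have h7 : 0 < ((N : ℝ) + 1) * (Real.sin (((N : ℝ) - 2 * (k : ℝ)) * α) * Real.sin α) :=
        mul_pos hNp1 (mul_pos hS0 hsinα0)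
      have h8 : 0 < ((N : ℝ) - 2 * (k : ℝ)) * Real.cos (((N : ℝ) + 1) * α) :=
        mul_pos (by linarith) hC0
      rw [show Real.cos (((N : ℝ) + 1 - 2 * (k : ℝ)) * α)
            + (-1) * (((N : ℝ) + 1 - 2 * (k : ℝ)) / ((N : ℝ) + 1)) * Real.cos (((N : ℝ) + 1) * α)
          = (((N : ℝ) + 1) * Real.cos (((N : ℝ) + 1 - 2 * (k : ℝ)) * α)
              - ((N : ℝ) + 1 - 2 * (k : ℝ)) * Real.cos (((N : ℝ) + 1) * α)) / ((N : ℝ) + 1) from by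
          field_simp; ring,
        show Real.cos (((N : ℝ) - 1 - 2 * (k : ℝ)) * α)
            + 1 * (((N : ℝ) - 1 - 2 * (k : ℝ)) / ((N : ℝ) + 1)) * Real.cos (((N : ℝ) + 1) * α)
          = (((N : ℝ) + 1) * Real.cos (((N : ℝ) - 1 - 2 * (k : ℝ)) * α)
              + ((N : ℝ) - 1 - 2 * (k : ℝ)) * Real.cos (((N : ℝ) + 1) * α)) / ((N : ℝ) + 1) from by
          field_simp,
        div_lt_div_iff_of_pos_right hNp1]
      linarith [h6, h7, h8]
    · -- k odd : coefficient signs ε_k = 1, ε_{k+1} = -1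
      rw [(Nat.Odd.sub_odd hko odd_one).neg_one_pow, hko.neg_one_pow]
      have h6 : ((N : ℝ) + 1) * (Real.cos (((N : ℝ) - 1 - 2 * (k : ℝ)) * α)
          - Real.cos (((N : ℝ) + 1 - 2 * (k : ℝ)) * α))
          = ((N : ℝ) + 1) * (2 * Real.sin (((N : ℝ) - 2 * (k : ℝ)) * α) * Real.sin α) := by
        rw [hd]
      have h7 : ((N : ℝ) - 2 * (k : ℝ)) * Real.sin (α - δ)
          < ((N : ℝ) - 2 * (k : ℝ)) * (Real.sin α * Real.cos (α - δ)) :=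
        mul_lt_mul_of_pos_left KEY (by linarith)
      have h8 : ((N : ℝ) - 2 * (k : ℝ)) / ((N : ℝ) + 1) * Real.cos (α - δ)
          ≤ Real.sin (((N : ℝ) - 2 * (k : ℝ)) * α) := by
        rw [← hSeq]; exact hconc
      have h9 : ((N : ℝ) - 2 * (k : ℝ)) / ((N : ℝ) + 1) * Real.cos (α - δ) * Real.sin α
          ≤ Real.sin (((N : ℝ) - 2 * (k : ℝ)) * α) * Real.sin α :=
        mul_le_mul_of_nonneg_right h8 hsinα0.le
      have h11 : ((N : ℝ) + 1) * (((N : ℝ) - 2 * (k : ℝ)) / ((N : ℝ) + 1) * Real.cos (α - δ) * Real.sin α)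
          ≤ ((N : ℝ) + 1) * (Real.sin (((N : ℝ) - 2 * (k : ℝ)) * α) * Real.sin α) :=
        mul_le_mul_of_nonneg_left h9 hNp1.le
      have h10 : ((N : ℝ) + 1) * (((N : ℝ) - 2 * (k : ℝ)) / ((N : ℝ) + 1) * Real.cos (α - δ) * Real.sin α)
          = ((N : ℝ) - 2 * (k : ℝ)) * (Real.cos (α - δ) * Real.sin α) := by
        field_simp
      rw [show Real.cos (((N : ℝ) + 1 - 2 * (k : ℝ)) * α)
            + 1 * (((N : ℝ) + 1 - 2 * (k : ℝ)) / ((N : ℝ) + 1)) * Real.cos (((N : ℝ) + 1) * α)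
          = (((N : ℝ) + 1) * Real.cos (((N : ℝ) + 1 - 2 * (k : ℝ)) * α)
              + ((N : ℝ) + 1 - 2 * (k : ℝ)) * Real.cos (((N : ℝ) + 1) * α)) / ((N : ℝ) + 1) from by
          field_simp,
        show Real.cos (((N : ℝ) - 1 - 2 * (k : ℝ)) * α)
            + (-1) * (((N : ℝ) - 1 - 2 * (k : ℝ)) / ((N : ℝ) + 1)) * Real.cos (((N : ℝ) + 1) * α)
          = (((N : ℝ) + 1) * Real.cos (((N : ℝ) - 1 - 2 * (k : ℝ)) * α)
              - ((N : ℝ) - 1 - 2 * (k : ℝ)) * Real.cos (((N : ℝ) + 1) * α)) / ((N : ℝ) + 1) from by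
          field_simp; ring,
        div_lt_div_iff_of_pos_right hNp1, hCeq]
      linarith [h6, h7, h10, h11]
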